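/- With the code C(u,v,t) over F_{q²} defined via the block parity-check matrix with per-block Vandermonde rows of exponents 1,…,u and global rows of exponents u+1,…,u+v (in primitive (q-1)-th roots of unity ω₁,…,ω_t), if 2u + v ≤ q - 2 then C(u,0,t)^{⊥_H} ⊆ C(u,v,t), i.e., every row of the parity-check matrix of C(u,v,t) is Hermitian-orthogonal to every row of the parity-check matrix of C(u,0,t). -/

import Mathlib

lemma mySumRoot {F : Type*} [Field F] (z : F) (n m : ℕ) (hz : orderOf z = n)
    (hm : ¬ n ∣ m) : ∑ a : Fin n, z ^ (m * a.val) = 0 := by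
  have hzm : z ^ m ≠ 1 := fun h => hm (hz ▸ orderOf_dvd_of_pow_eq_one h)
  have hzn : (z ^ m) ^ n = 1 := by
    rw [← pow_mul, mul_comm, pow_mul, ← hz, pow_orderOf_eq_one, one_pow]
  calc ∑ a : Fin n, z ^ (m * a.val) = ∑ a ∈ Finset.range n, (z ^ m) ^ a := by
        rw [Finset.sum_range fun a => (z ^ m) ^ a]
        exact Finset.sum_congr rfl fun a _ => by rw [pow_mul]
    _ = ((z ^ m) ^ n - 1) / (z ^ m - 1) := geom_sum_eq hzm n
    _ = 0 := by rw [hzn, sub_self, zero_div]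

lemma mySumCollapse {F : Type*} [Field F] {t n : ℕ} (i : Fin t)
    (f : Fin t × Fin n → F) (g : Fin n → F) :
    ∑ c : Fin t × Fin n, f c * (if c.1 = i then g c.2 else 0)
      = ∑ a : Fin n, f (i, a) * g a := by
  rw [Fintype.sum_prod_type]
  rw [Finset.sum_eq_single i]
  · simp
  · intro k _ hk
    simp [hk]
  · simp

lemma myNotDvd (q c1 c2 : ℕ) (hq : 2 ≤ q) (h1 : 1 ≤ c1) (h2 : 1 ≤ c2)
    (hs : c1 + c2 ≤ q - 2) : ¬ (q - 1) ∣ (c1 + q * c2) := by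
  intro h
  have hkey : c1 + q * c2 = (c1 + c2) + (q - 1) * c2 := by
    have : q * c2 = (q - 1) * c2 + c2 := by
      calc q * c2 = ((q - 1) + 1) * c2 := by rw [Nat.sub_add_cancel (by omega)]
        _ = (q - 1) * c2 + c2 := by ring
    omega
  rw [hkey] at h
  have hd : (q - 1) ∣ (c1 + c2) :=
    (Nat.dvd_add_right (Dvd.intro c2 rfl)).mp (by rwa [add_comm] at h)
  have := Nat.le_of_dvd (by omega) hd
  omega

/-- The parity-check matrix of the code C(u,v,t) over F_{q²}. -/
def parityH (q u v t : ℕ) {F : Type*} [Field F] (ω : Fin t → F) :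
    Matrix ((Fin t × Fin u) ⊕ Fin v) (Fin t × Fin (q - 1)) F :=
  fun r c =>
    match r with
    | Sum.inl (i, j) => if c.1 = i then ω i ^ ((j.val + 1) * c.2.val) else 0
    | Sum.inr j => ω c.1 ^ ((u + j.val + 1) * c.2.val)

lemma myInner {F : Type*} [Field F] (q u v t : ℕ) (hq0 : q ≠ 0) (hq2 : 2 ≤ q)
    (huv : 2 * u + v ≤ q - 2)
    (ω : Fin t → F) (hω : ∀ i, orderOf (ω i) = q - 1)
    (r' : (Fin t × Fin u) ⊕ Fin v) (i : Fin t) (j' : Fin u) :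
    ∑ c : Fin t × Fin (q - 1),
      parityH q u v t ω r' c * (parityH q u 0 t ω (Sum.inl (i, j')) c) ^ q = 0 := by
  have h1 : ∀ c : Fin t × Fin (q - 1), (parityH q u 0 t ω (Sum.inl (i, j')) c) ^ q
      = if c.1 = i then (ω i ^ ((j'.val + 1) * c.2.val)) ^ q else 0 := by
    intro c
    show (if c.1 = i then ω i ^ ((j'.val + 1) * c.2.val) else 0) ^ q = _
    rw [apply_ite (· ^ q), zero_pow hq0]
  simp only [h1]
  rw [mySumCollapse i (parityH q u v t ω r') (fun a => (ω i ^ ((j'.val + 1) * a.val)) ^ q)]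
  have hj' : j'.val < u := j'.isLt
  rcases r' with ⟨i', j⟩ | j
  · by_cases hii : i = i'
    · subst hii
      have hterm : ∀ a : Fin (q - 1),
          parityH q u v t ω (Sum.inl (i, j)) (i, a) * (ω i ^ ((j'.val + 1) * a.val)) ^ q
            = ω i ^ (((j.val + 1) + q * (j'.val + 1)) * a.val) := by
        intro a
        show (if i = i then ω i ^ ((j.val + 1) * a.val) else 0) * _ = _
        rw [if_pos rfl, ← pow_mul, ← pow_add]
        congr 1
        ring
      rw [Finset.sum_congr rfl fun a _ => hterm a]
      exact mySumRoot (ω i) (q - 1) _ (hω i)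
        (myNotDvd q (j.val + 1) (j'.val + 1) hq2 (by omega) (by omega)
          (by have := j.isLt; omega))
    · apply Finset.sum_eq_zero
      intro a _
      show (if i = i' then ω i' ^ ((j.val + 1) * a.val) else 0) * _ = 0
      rw [if_neg hii, zero_mul]
  · have hterm : ∀ a : Fin (q - 1),
        parityH q u v t ω (Sum.inr j) (i, a) * (ω i ^ ((j'.val + 1) * a.val)) ^ q
          = ω i ^ (((u + j.val + 1) + q * (j'.val + 1)) * a.val) := by
      intro a
      show ω i ^ ((u + j.val + 1) * a.val) * _ = _
      rw [← pow_mul, ← pow_add]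
      congr 1
      ring
    rw [Finset.sum_congr rfl fun a _ => hterm a]
    exact mySumRoot (ω i) (q - 1) _ (hω i)
      (myNotDvd q (u + j.val + 1) (j'.val + 1) hq2 (by omega) (by omega)
        (by have := j.isLt; omega))

/-- if 2u + v ≤ q - 2, then the Hermitian dual of C(u,0,t) is
contained in C(u,v,t). -/
theorem stmt_10 (p e q u v t : ℕ) (hp : p.Prime) (he : 0 < e) (hq : q = p ^ e)
    (hq5 : 5 ≤ q) (hu : 1 ≤ u) (ht : 1 ≤ t) (hvu : v ≤ u)
    (huv : 2 * u + v ≤ q - 2)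
    {F : Type*} [Field F] [Fintype F] [DecidableEq F]
    (hF : Fintype.card F = q ^ 2)
    (ω : Fin t → F) (hω : ∀ i, orderOf (ω i) = q - 1) :
    ∀ x : Fin t × Fin (q - 1) → F,
      (∀ y ∈ LinearMap.ker (parityH q u 0 t ω).mulVecLin,
        ∑ c, x c * (y c) ^ q = 0) →
      x ∈ LinearMap.ker (parityH q u v t ω).mulVecLin := by
  intro x hx
  have hq0 : q ≠ 0 := by omega
  -- characteristic
  have hcharP : CharP F p := by
    have h1 : Fintype.card F = p ^ (2 * e) := by rw [hF, hq, ← pow_mul, mul_comm]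
    rcases CharP.exists F with ⟨p', hp'⟩
    haveI := hp'
    obtain ⟨n, hp'prime, hcard⟩ := FiniteField.card F p'
    have hpp' : p = p' := by
      have hd : p ∣ p' ^ (n : ℕ) := by
        rw [← hcard, h1]
        exact dvd_pow_self p (by omega)
      exact (Nat.prime_dvd_prime_iff_eq hp hp'prime).mp (hp.dvd_of_dvd_pow hd)
    rwa [hpp']
  haveI := hcharP
  haveI : ExpChar F p := ExpChar.prime hp
  have hsq : ∀ a : F, (a ^ q) ^ q = a := by
    intro a
    rw [← pow_mul, ← sq, ← hF, FiniteField.pow_card]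
  -- translate the Hermitian condition into an ordinary one
  have hx' : ∀ y ∈ LinearMap.ker (parityH q u 0 t ω).mulVecLin,
      ∑ c, (x c) ^ q * y c = 0 := by
    intro y hy
    have h1 : (∑ c, (x c) ^ q * y c) ^ q = 0 := by
      have h2 := map_sum (iterateFrobenius F p e)
        (fun c => (x c) ^ q * y c) Finset.univ
      simp only [iterateFrobenius_def, ← hq, mul_pow] at h2
      rw [h2]
      have h3 : ∀ c : Fin t × Fin (q - 1), ((x c) ^ q) ^ q * (y c) ^ q = x c * (y c) ^ q :=
        fun c => by rw [hsq]
      rw [Finset.sum_congr rfl fun c _ => h3 c]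
      exact hx y hy
    exact pow_eq_zero_iff hq0 |>.mp h1
  -- the dual functional
  set f := (parityH q u 0 t ω).mulVecLin with hf
  let g : ((Fin t × Fin (q - 1)) → F) →ₗ[F] F :=
    { toFun := fun y => ∑ c, (x c) ^ q * y c
      map_add' := by
        intro y z
        simp [mul_add, Finset.sum_add_distrib]
      map_smul' := by
        intro a y
        simp [Finset.mul_sum, mul_left_comm] }
  have hg : g ∈ (LinearMap.ker f).dualAnnihilator := by
    rw [Submodule.mem_dualAnnihilator]
    exact hx'
  rw [← LinearMap.range_dualMap_eq_dualAnnihilator_ker] at hg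
  obtain ⟨φ, hφ⟩ := hg
  set lam : ((Fin t × Fin u) ⊕ Fin 0) → F :=
    fun r => φ (fun r' => if r = r' then 1 else 0) with hlam
  -- row span representation
  have hrep : ∀ c, (x c) ^ q = ∑ r, parityH q u 0 t ω r c * lam r := by
    intro c
    have h1 := LinearMap.congr_fun hφ (Pi.single c 1)
    have hgc : g (Pi.single c 1) = (x c) ^ q := by
      simp only [g, LinearMap.coe_mk, AddHom.coe_mk]
      rw [Finset.sum_eq_single c] <;> simp_all [Pi.single_apply]
    have hfc : f (Pi.single c 1) = fun r => parityH q u 0 t ω r c := by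
      rw [hf, Matrix.mulVecLin_apply, Matrix.mulVec_single]
      simp
      rfl
    rw [LinearMap.dualMap_apply, hfc, hgc] at h1
    rw [← h1]
    rw [pi_eq_sum_univ (fun r => parityH q u 0 t ω r c), map_sum]
    refine Finset.sum_congr rfl fun r _ => ?_
    rw [map_smul, smul_eq_mul, hlam]
  have hxc : ∀ c, x c = ∑ r, (parityH q u 0 t ω r c) ^ q * (lam r) ^ q := by
    intro c
    have h3 : (∑ r, parityH q u 0 t ω r c * lam r) ^ q
        = ∑ r, (parityH q u 0 t ω r c) ^ q * (lam r) ^ q := by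
      have h2 := map_sum (iterateFrobenius F p e)
        (fun r => parityH q u 0 t ω r c * lam r) Finset.univ
      simpa only [iterateFrobenius_def, ← hq, mul_pow] using h2
    conv_lhs => rw [← hsq (x c), hrep c]
    exact h3
  -- now show membership
  rw [LinearMap.mem_ker, Matrix.mulVecLin_apply]
  funext r'
  show ∑ c, parityH q u v t ω r' c * x c = 0
  calc ∑ c, parityH q u v t ω r' c * x c
      = ∑ c, ∑ r, parityH q u v t ω r' c * ((parityH q u 0 t ω r c) ^ q * (lam r) ^ q) := by
        refine Finset.sum_congr rfl fun c _ => ?_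
        rw [hxc c, Finset.mul_sum]
    _ = ∑ r, ∑ c, parityH q u v t ω r' c * ((parityH q u 0 t ω r c) ^ q * (lam r) ^ q) :=
        Finset.sum_comm
    _ = ∑ r, (∑ c, parityH q u v t ω r' c * (parityH q u 0 t ω r c) ^ q) * (lam r) ^ q := by
        refine Finset.sum_congr rfl fun r _ => ?_
        rw [Finset.sum_mul]
        exact Finset.sum_congr rfl fun c _ => (mul_assoc _ _ _).symm
    _ = 0 := by
        apply Finset.sum_eq_zero
        rintro (⟨i, j'⟩ | r0) -
        · rw [myInner q u v t hq0 (by omega) huv ω hω r' i j', zero_mul]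
        · exact r0.elim0
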